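/- Fix integers m, n ≥ 0 and let (γ₁, γ₂) ∈ P(m) × P(n) be a relevant pair, written γ₁ = (x₁ ≥ ⋯ ≥ x_r) and γ₂ = (y₁ ≥ ⋯ ≥ y_r) with zero parts appended to a common length r. Then the number of relevant decorated bipartitions γ ∈ RDP(m,n) with μ†(γ) = (γ₁, γ₂) equals the product over k ≥ 1 of (λ_k + 1), where λ_k is the number of indices i with x_i = y_i = k. -/

import Mathlib

/-- A decorated pair of non-negative integers: `AB j` encodes the pair `(j+1, j)`
(i.e. type `(k, k-1)` with `k = j+1`), `BA j` encodes `(j, j+1)` (type `(k-1, k)`),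
`P j` encodes `(j+1, j+1)⁺` and `M j` encodes `(j+1, j+1)⁻`. -/
inductive DPair : Type
  | AB : ℕ → DPair
  | BA : ℕ → DPair
  | P : ℕ → DPair
  | M : ℕ → DPair
deriving DecidableEq

namespace DPair

/-- The first coordinate of a decorated pair. -/
def a : DPair → ℕ
  | AB j => j + 1
  | BA j => j
  | P j => j + 1
  | M j => j + 1

/-- The second coordinate of a decorated pair. -/
def b : DPair → ℕ
  | AB j => j
  | BA j => j + 1
  | P j => j + 1
  | M j => j + 1

end DPair

/-- `γ` is a decorated bipartition of `(m, n)`: the first coordinates sum to `m`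
and the second coordinates sum to `n`. -/
def IsDP (m n : ℕ) (γ : Multiset DPair) : Prop :=
  (γ.map DPair.a).sum = m ∧ (γ.map DPair.b).sum = n

/-- `γ` is relevant: for no `k ≥ 1` do both a pair of type `(k, k-1)` and a pair of
type `(k-1, k)` occur in `γ`. -/
def IsRelevantDP (γ : Multiset DPair) : Prop :=
  ∀ j : ℕ, ¬(DPair.AB j ∈ γ ∧ DPair.BA j ∈ γ)

/-- The first component `μ₁†` of the moment map: the multiset of first coordinates,
with zero parts discarded. -/
def muA (γ : Multiset DPair) : Multiset ℕ :=
  (γ.map DPair.a).filter (0 < ·)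

/-- The second component `μ₂†` of the moment map. -/
def muB (γ : Multiset DPair) : Multiset ℕ :=
  (γ.map DPair.b).filter (0 < ·)

/-- The `i`-th entry (0-indexed) of a multiset of naturals sorted in decreasing order,
with the value `0` for indices beyond the length (i.e. zero parts appended). -/
def nthPart (s : Multiset ℕ) (i : ℕ) : ℕ :=
  ((s.sort (· ≤ ·)).reverse).getD i 0

/-- A pair of partitions (given by their multisets of parts) is relevant if, after
sorting decreasingly and appending zero parts, corresponding parts differ by at most 1. -/
def RelevantPair (p q : Multiset ℕ) : Prop :=
  ∀ i : ℕ, nthPart p i ≤ nthPart q i + 1 ∧ nthPart q i ≤ nthPart p i + 1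

/-- `λ_k`: the number of indices `i` at which both padded decreasing sequences of parts
take the value `k`. -/
noncomputable def lambdaCount (p q : Multiset ℕ) (k : ℕ) : ℕ :=
  {i : ℕ | nthPart p i = k ∧ nthPart q i = k}.ncard


/-! ### Auxiliary lemmas -/

namespace RDPAux

open DPair Finset

theorem list_map_getD (L : List ℕ) : (List.range L.length).map (fun i => L.getD i 0) = L := by
  induction L with
  | nil => simp
  | cons x t ih =>
    rw [List.length_cons, List.range_succ_eq_map, List.map_cons]
    simp only [List.getD_cons_zero, List.map_map]
    have : (fun i => (x :: t).getD i 0) ∘ Nat.succ = (fun i => t.getD i 0) := by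
      funext i; simp
    rw [this, ih]

theorem nthPart_antitone (s : Multiset ℕ) {i j : ℕ} (h : i ≤ j) : nthPart s j ≤ nthPart s i := by
  unfold nthPart
  set L := (s.sort (· ≤ ·)).reverse with hL
  by_cases hj : j < L.length
  · have hi : i < L.length := lt_of_le_of_lt h hj
    rw [List.getD_eq_getElem _ _ hj, List.getD_eq_getElem _ _ hi]
    have hsorted : L.Pairwise (· ≥ ·) := by
      rw [hL]
      exact List.pairwise_reverse.mpr (Multiset.pairwise_sort s (· ≤ ·))
    rcases eq_or_lt_of_le h with rfl | hlt
    · exact le_refl _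
    · exact List.pairwise_iff_getElem.mp hsorted i j hi hj hlt
  · rw [List.getD_eq_default _ _ (not_lt.mp hj)]
    exact Nat.zero_le _

theorem nthPart_eq_zero (s : Multiset ℕ) {i : ℕ} (h : Multiset.card s ≤ i) : nthPart s i = 0 := by
  unfold nthPart; apply List.getD_eq_default; simpa using h

theorem lt_card_of_nthPart_pos {s : Multiset ℕ} {i : ℕ} (h : 0 < nthPart s i) :
    i < Multiset.card s := by
  by_contra hc
  rw [nthPart_eq_zero s (not_lt.mp hc)] at h
  exact absurd h (lt_irrefl 0)

theorem nthPart_mem (s : Multiset ℕ) (i : ℕ) (h : 0 < nthPart s i) : nthPart s i ∈ s := by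
  unfold nthPart at *
  have hi : i < ((s.sort (· ≤ ·)).reverse).length := by
    simpa using lt_card_of_nthPart_pos h
  rw [List.getD_eq_getElem _ _ hi]
  have := List.getElem_mem hi
  rw [List.mem_reverse] at this
  exact (Multiset.mem_sort _).mp this

theorem nthPart_le_sum (s : Multiset ℕ) (i : ℕ) : nthPart s i ≤ s.sum := by
  rcases Nat.eq_zero_or_pos (nthPart s i) with h | h
  · omega
  · exact Multiset.single_le_sum (fun x _ => Nat.zero_le x) _ (nthPart_mem s i h)

theorem count_nthPart (s : Multiset ℕ) {k R : ℕ} (hk : 1 ≤ k) (hR : Multiset.card s ≤ R) :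
    ((Finset.range R).filter (fun i => nthPart s i = k)).card = s.count k := by
  set L := (s.sort (· ≤ ·)).reverse with hL
  have hlen : L.length = Multiset.card s := by simp [hL]
  have h1 : (Finset.range R).filter (fun i => nthPart s i = k)
      = (Finset.range L.length).filter (fun i => nthPart s i = k) := by
    ext i
    simp only [Finset.mem_filter, Finset.mem_range]
    constructor
    · rintro ⟨_, h2⟩
      refine ⟨?_, h2⟩
      rw [hlen]
      exact lt_card_of_nthPart_pos (by omega)
    · rintro ⟨h1, h2⟩
      exact ⟨by omega, h2⟩
  rw [h1]
  have h2 : ((Finset.range L.length).filter (fun i => nthPart s i = k)).card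
      = Multiset.countP (fun i => nthPart s i = k) (Finset.range L.length).val := by
    rw [Finset.card, Finset.filter_val, ← Multiset.countP_eq_card_filter]
  rw [h2]
  have h4 : Multiset.countP (fun i => nthPart s i = k) (Finset.range L.length).val
      = Multiset.countP (fun x => x = k)
        (((Finset.range L.length).val).map (fun i => L.getD i 0)) := by
    rw [Multiset.countP_map, ← Multiset.countP_eq_card_filter]
    apply Multiset.countP_congr rfl
    intro x _; rfl
  rw [h4]
  have h5 : ((Finset.range L.length).val).map (fun i => L.getD i 0) = s := by
    have : (Finset.range L.length).val = ((List.range L.length : List ℕ) : Multiset ℕ) := rfl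
    rw [this, Multiset.map_coe, list_map_getD, hL, Multiset.coe_reverse, Multiset.sort_eq]
  rw [h5, Multiset.count]
  symm
  apply Multiset.countP_congr rfl
  intro x _; simp [eq_comm]

/-- The number of indices `i < R` at which the padded parts of `p` equal `k` and those of
`q` equal `l`. -/
def cnt2 (p q : Multiset ℕ) (R k l : ℕ) : ℕ :=
  ((Finset.range R).filter (fun i => nthPart p i = k ∧ nthPart q i = l)).card

theorem cnt2_comm (p q : Multiset ℕ) (R k l : ℕ) : cnt2 p q R k l = cnt2 q p R l k := by
  unfold cnt2
  congr 1
  apply Finset.filter_congr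
  intro i _
  constructor <;> exact fun h => ⟨h.2, h.1⟩

theorem cnt2_eq_zero_left {p : Multiset ℕ} (q : Multiset ℕ) {R k : ℕ} (l : ℕ)
    (h : p.sum < k) : cnt2 p q R k l = 0 := by
  unfold cnt2
  rw [Finset.card_eq_zero, Finset.filter_eq_empty_iff]
  intro i _
  rintro ⟨h1, -⟩
  have := nthPart_le_sum p i
  omega

theorem cnt2_eq_zero_right (p : Multiset ℕ) {q : Multiset ℕ} {R l : ℕ} (k : ℕ)
    (h : q.sum < l) : cnt2 p q R k l = 0 := by
  rw [cnt2_comm]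
  exact cnt2_eq_zero_left p k h

theorem relevantPair_symm {p q : Multiset ℕ} (h : RelevantPair p q) : RelevantPair q p :=
  fun i => ⟨(h i).2, (h i).1⟩

theorem count_split (p q : Multiset ℕ) {R : ℕ} (hrel : RelevantPair p q)
    (hp : Multiset.card p ≤ R) (j : ℕ) :
    p.count (j + 1) = cnt2 p q R (j+1) j + cnt2 p q R (j+1) (j+1) + cnt2 p q R (j+1) (j+2) := by
  rw [← count_nthPart p (Nat.le_add_left 1 j) hp]
  have hsplit : (Finset.range R).filter (fun i => nthPart p i = j + 1) =
      (((Finset.range R).filter (fun i => nthPart p i = j + 1 ∧ nthPart q i = j)) ∪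
      ((Finset.range R).filter (fun i => nthPart p i = j + 1 ∧ nthPart q i = j + 1))) ∪
      ((Finset.range R).filter (fun i => nthPart p i = j + 1 ∧ nthPart q i = j + 2)) := by
    ext i
    simp only [Finset.mem_filter, Finset.mem_union, Finset.mem_range]
    have h1 := (hrel i).1
    have h2 := (hrel i).2
    constructor
    · rintro ⟨hiR, hX⟩
      have : nthPart q i = j ∨ nthPart q i = j + 1 ∨ nthPart q i = j + 2 := by omega
      rcases this with h | h | h
      · exact Or.inl (Or.inl ⟨hiR, hX, h⟩)
      · exact Or.inl (Or.inr ⟨hiR, hX, h⟩)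
      · exact Or.inr ⟨hiR, hX, h⟩
    · rintro ((⟨hiR, hX, -⟩ | ⟨hiR, hX, -⟩) | ⟨hiR, hX, -⟩) <;> exact ⟨hiR, hX⟩
  rw [hsplit, Finset.card_union_of_disjoint, Finset.card_union_of_disjoint]
  · rfl
  · rw [Finset.disjoint_left]
    intro i hi1 hi2
    simp only [Finset.mem_filter] at hi1 hi2
    omega
  · rw [Finset.disjoint_left]
    intro i hi1 hi2
    simp only [Finset.mem_filter, Finset.mem_union] at hi1 hi2
    rcases hi1 with hi1 | hi1 <;> omega

theorem cnt2_mul_eq_zero (p q : Multiset ℕ) (R j : ℕ) :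
    cnt2 p q R (j+1) j = 0 ∨ cnt2 p q R j (j+1) = 0 := by
  by_contra hc
  push_neg at hc
  obtain ⟨h1, h2⟩ := hc
  unfold cnt2 at h1 h2
  obtain ⟨i, hi⟩ := Finset.card_pos.mp (Nat.pos_of_ne_zero h1)
  obtain ⟨i', hi'⟩ := Finset.card_pos.mp (Nat.pos_of_ne_zero h2)
  simp only [Finset.mem_filter, Finset.mem_range] at hi hi'
  rcases le_total i i' with h | h
  · have := nthPart_antitone q h
    omega
  · have := nthPart_antitone p h
    omega

theorem lambdaCount_eq_cnt2 (p q : Multiset ℕ) {R k : ℕ} (hk : 1 ≤ k)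
    (hp : Multiset.card p ≤ R) :
    lambdaCount p q k = cnt2 p q R k k := by
  unfold lambdaCount cnt2
  rw [← Set.ncard_coe_finset]
  congr 1
  ext i
  simp only [Finset.coe_filter, Set.mem_setOf_eq, Finset.mem_range]
  constructor
  · rintro ⟨h1, h2⟩
    have : i < Multiset.card p := lt_card_of_nthPart_pos (by omega)
    exact ⟨by omega, h1, h2⟩
  · rintro ⟨-, h1, h2⟩
    exact ⟨h1, h2⟩

/-! ### Multisets of decorated pairs -/

theorem countP_a (γ : Multiset DPair) (j : ℕ) :
    γ.countP (fun d => d.a = j + 1) =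
      γ.count (AB j) + γ.count (P j) + γ.count (M j) + γ.count (BA (j+1)) := by
  induction γ using Multiset.induction_on with
  | empty => simp
  | cons d γ ih =>
    rw [Multiset.countP_cons]
    simp only [Multiset.count_cons, ih]
    rcases d with i | i | i | i <;>
      simp only [DPair.a, DPair.AB.injEq, DPair.BA.injEq, DPair.P.injEq, DPair.M.injEq,
        reduceCtorEq, if_false] <;>
      split_ifs <;> simp_all <;> omega

theorem countP_b (γ : Multiset DPair) (j : ℕ) :
    γ.countP (fun d => d.b = j + 1) =
      γ.count (BA j) + γ.count (P j) + γ.count (M j) + γ.count (AB (j+1)) := by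
  induction γ using Multiset.induction_on with
  | empty => simp
  | cons d γ ih =>
    rw [Multiset.countP_cons]
    simp only [Multiset.count_cons, ih]
    rcases d with i | i | i | i <;>
      simp only [DPair.b, DPair.AB.injEq, DPair.BA.injEq, DPair.P.injEq, DPair.M.injEq,
        reduceCtorEq, if_false] <;>
      split_ifs <;> simp_all <;> omega

theorem count_muA (γ : Multiset DPair) (j : ℕ) :
    (muA γ).count (j + 1) =
      γ.count (AB j) + γ.count (P j) + γ.count (M j) + γ.count (BA (j+1)) := by
  rw [← countP_a]
  unfold muA
  rw [Multiset.count_filter, if_pos (Nat.succ_pos j), Multiset.count_map,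
    ← Multiset.countP_eq_card_filter]
  apply Multiset.countP_congr rfl
  intro x _
  simp [eq_comm]

theorem count_muB (γ : Multiset DPair) (j : ℕ) :
    (muB γ).count (j + 1) =
      γ.count (BA j) + γ.count (P j) + γ.count (M j) + γ.count (AB (j+1)) := by
  rw [← countP_b]
  unfold muB
  rw [Multiset.count_filter, if_pos (Nat.succ_pos j), Multiset.count_map,
    ← Multiset.countP_eq_card_filter]
  apply Multiset.countP_congr rfl
  intro x _
  simp [eq_comm]

theorem sum_filter_pos (s : Multiset ℕ) : (s.filter (0 < ·)).sum = s.sum := by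
  conv_rhs => rw [← Multiset.filter_add_not (0 < ·) s]
  rw [Multiset.sum_add]
  have : (s.filter (fun a => ¬ 0 < a)).sum = 0 := by
    apply Multiset.sum_eq_zero
    intro x hx
    rw [Multiset.mem_filter] at hx
    omega
  omega

theorem a_le_of_mem {γ : Multiset DPair} {d : DPair} (h : d ∈ γ) :
    d.a ≤ (γ.map DPair.a).sum :=
  Multiset.single_le_sum (fun x _ => Nat.zero_le x) _ (Multiset.mem_map_of_mem _ h)

theorem b_le_of_mem {γ : Multiset DPair} {d : DPair} (h : d ∈ γ) :
    d.b ≤ (γ.map DPair.b).sum :=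
  Multiset.single_le_sum (fun x _ => Nat.zero_le x) _ (Multiset.mem_map_of_mem _ h)

theorem determine {e E c : ℕ → ℤ} {B : ℕ}
    (he : ∀ j, e j = c j + e (j+1)) (hE : ∀ j, E j = c j + E (j+1))
    (he0 : ∀ j, B ≤ j → e j = 0) (hE0 : ∀ j, B ≤ j → E j = 0) : ∀ j, e j = E j := by
  have key : ∀ t j, B ≤ j + t → e j = E j := by
    intro t
    induction t with
    | zero =>
      intro j h
      rw [he0 j (by omega), hE0 j (by omega)]
    | succ t ih =>
      intro j h
      by_cases hj : B ≤ j
      · rw [he0 j hj, hE0 j hj]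
      · rw [he j, hE j, ih (j+1) (by omega)]
  intro j
  exact key B j (by omega)

/-! ### Counting in explicitly constructed multisets -/

theorem count_gsum (D : Finset ℕ) (hD : ∀ k ∈ D, 1 ≤ k) (u1 u2 u3 u4 : ℕ → ℕ) (j : ℕ) :
    ((∑ k ∈ D, (u1 k • ({AB (k-1)} : Multiset DPair) + u2 k • {BA (k-1)} +
        u3 k • {P (k-1)} + u4 k • {M (k-1)})).count (AB j) = if j+1 ∈ D then u1 (j+1) else 0) ∧
    ((∑ k ∈ D, (u1 k • ({AB (k-1)} : Multiset DPair) + u2 k • {BA (k-1)} +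
        u3 k • {P (k-1)} + u4 k • {M (k-1)})).count (BA j) = if j+1 ∈ D then u2 (j+1) else 0) ∧
    ((∑ k ∈ D, (u1 k • ({AB (k-1)} : Multiset DPair) + u2 k • {BA (k-1)} +
        u3 k • {P (k-1)} + u4 k • {M (k-1)})).count (P j) = if j+1 ∈ D then u3 (j+1) else 0) ∧
    ((∑ k ∈ D, (u1 k • ({AB (k-1)} : Multiset DPair) + u2 k • {BA (k-1)} +
        u3 k • {P (k-1)} + u4 k • {M (k-1)})).count (M j) = if j+1 ∈ D then u4 (j+1) else 0) := by
  refine ⟨?_, ?_, ?_, ?_⟩ <;>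
  · rw [Multiset.count_sum']
    rw [← Finset.sum_ite_eq' D (j+1)]
    apply Finset.sum_congr rfl
    intro k hk
    have hk1 : 1 ≤ k := hD k hk
    simp only [Multiset.count_add, Multiset.count_nsmul, Multiset.count_singleton,
      DPair.AB.injEq, DPair.BA.injEq, DPair.P.injEq, DPair.M.injEq, reduceCtorEq, if_false,
      mul_zero, mul_ite, mul_one, add_zero, zero_add]
    split_ifs <;> omega

end RDPAux

open RDPAux DPair in
/-- For a relevant pair `(γ₁, γ₂) ∈ P(m) × P(n)`, the number of relevant decorated
bipartitions `γ ∈ RDP(m,n)` with `μ†(γ) = (γ₁, γ₂)` equals `∏_{k ≥ 1} (λ_k + 1)`. -/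
theorem ncard_fiber_eq_prod {m n : ℕ} (γ₁ : Nat.Partition m) (γ₂ : Nat.Partition n)
    (hrel : RelevantPair γ₁.parts γ₂.parts) :
    {γ : Multiset DPair | IsDP m n γ ∧ IsRelevantDP γ ∧
        muA γ = γ₁.parts ∧ muB γ = γ₂.parts}.ncard =
      ∏ᶠ k : {k : ℕ // 1 ≤ k}, (lambdaCount γ₁.parts γ₂.parts (k : ℕ) + 1) := by
  classical
  set p := γ₁.parts with hp
  set q := γ₂.parts with hq
  have psum : p.sum = m := γ₁.parts_sum
  have qsum : q.sum = n := γ₂.parts_sum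
  set R := Multiset.card p + Multiset.card q with hRdef
  have hpR : Multiset.card p ≤ R := by omega
  have hqR : Multiset.card q ≤ R := by omega
  set N := m + n + 1 with hNdef
  set D := Finset.Icc 1 N with hDdef
  have hD1 : ∀ k ∈ D, 1 ≤ k := fun k hk => (Finset.mem_Icc.mp hk).1
  set S := {γ : Multiset DPair | IsDP m n γ ∧ IsRelevantDP γ ∧
      muA γ = p ∧ muB γ = q} with hSdef
  -- partition-side identities
  have P1 : ∀ j, p.count (j+1) =
      cnt2 p q R (j+1) j + cnt2 p q R (j+1) (j+1) + cnt2 p q R (j+1) (j+2) :=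
    count_split p q hrel hpR
  have P2 : ∀ j, q.count (j+1) =
      cnt2 p q R j (j+1) + cnt2 p q R (j+1) (j+1) + cnt2 p q R (j+2) (j+1) := by
    intro j
    have h := count_split q p (relevantPair_symm hrel) hqR j
    rwa [cnt2_comm q p R (j+1) j, cnt2_comm q p R (j+1) (j+1),
      cnt2_comm q p R (j+1) (j+2)] at h
  have P3 := cnt2_mul_eq_zero p q R
  have pvan : ∀ j, m + n ≤ j → cnt2 p q R (j+1) j = 0 ∧ cnt2 p q R j (j+1) = 0 :=
    fun j hj => ⟨cnt2_eq_zero_left q j (by omega), cnt2_eq_zero_right p j (by omega)⟩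
  have cLvan : ∀ j, m + n ≤ j → cnt2 p q R (j+1) (j+1) = 0 :=
    fun j hj => cnt2_eq_zero_left q (j+1) (by omega)
  have pcvan : ∀ k, m < k → p.count k = 0 := by
    intro k hk
    rw [Multiset.count_eq_zero]
    intro hmem
    have := Multiset.single_le_sum (fun x (_ : x ∈ p) => Nat.zero_le x) _ hmem
    omega
  have qcvan : ∀ k, n < k → q.count k = 0 := by
    intro k hk
    rw [Multiset.count_eq_zero]
    intro hmem
    have := Multiset.single_le_sum (fun x (_ : x ∈ q) => Nat.zero_le x) _ hmem
    omega
  -- fiber-side determination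
  have hdet : ∀ γ ∈ S, ∀ j : ℕ,
      γ.count (DPair.AB j) = cnt2 p q R (j+1) j ∧
      γ.count (DPair.BA j) = cnt2 p q R j (j+1) := by
    intro γ hγ
    obtain ⟨⟨hsa, hsb⟩, hrelγ, hA, hB⟩ := hγ
    have countsA : ∀ j, γ.count (AB j) + γ.count (DPair.P j) + γ.count (M j)
        + γ.count (BA (j+1)) = p.count (j+1) := by
      intro j; rw [← hA, count_muA]
    have countsB : ∀ j, γ.count (BA j) + γ.count (DPair.P j) + γ.count (M j)
        + γ.count (AB (j+1)) = q.count (j+1) := by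
      intro j; rw [← hB, count_muB]
    have hvAB : ∀ j, m < j + 1 → γ.count (AB j) = 0 := by
      intro j hj
      rw [Multiset.count_eq_zero]
      intro hmem
      have h := a_le_of_mem hmem
      rw [hsa] at h
      simp only [DPair.a] at h
      omega
    have hvBA : ∀ j, n < j + 1 → γ.count (BA j) = 0 := by
      intro j hj
      rw [Multiset.count_eq_zero]
      intro hmem
      have h := b_le_of_mem hmem
      rw [hsb] at h
      simp only [DPair.b] at h
      omega
    have hee : ∀ j, (γ.count (AB j) : ℤ) - γ.count (BA j)
        = (cnt2 p q R (j+1) j : ℤ) - cnt2 p q R j (j+1) := by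
      apply determine (c := fun j => (p.count (j+1) : ℤ) - q.count (j+1)) (B := m + n)
      · intro j
        have h1 := countsA j
        have h2 := countsB j
        omega
      · intro j
        have h1 := P1 j
        have h2 := P2 j
        simp only [show ∀ t : ℕ, t + 1 + 1 = t + 2 from fun t => rfl]
        omega
      · intro j hj
        have h1 := hvAB j (by omega)
        have h2 := hvBA j (by omega)
        omega
      · intro j hj
        have := pvan j hj
        omega
    intro j
    have hor1 : γ.count (AB j) = 0 ∨ γ.count (BA j) = 0 := by
      by_contra hc
      push_neg at hc
      have m1 : AB j ∈ γ := by rw [← Multiset.count_pos]; omega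
      have m2 : BA j ∈ γ := by rw [← Multiset.count_pos]; omega
      exact hrelγ j ⟨m1, m2⟩
    have hor2 := P3 j
    have h := hee j
    rcases hor1 with h1 | h1 <;> rcases hor2 with h2 | h2 <;> constructor <;> omega
  have hPM : ∀ γ ∈ S, ∀ j : ℕ,
      γ.count (DPair.P j) + γ.count (DPair.M j) = cnt2 p q R (j+1) (j+1) := by
    intro γ hγ j
    obtain ⟨h1, -⟩ := hdet γ hγ j
    obtain ⟨-, h4⟩ := hdet γ hγ (j+1)
    simp only [show ∀ t : ℕ, t + 1 + 1 = t + 2 from fun t => rfl] at h4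
    obtain ⟨⟨hsa, hsb⟩, hrelγ, hA, hB⟩ := hγ
    have cA : γ.count (AB j) + γ.count (DPair.P j) + γ.count (M j)
        + γ.count (BA (j+1)) = p.count (j+1) := by
      rw [← hA, count_muA]
    have := P1 j
    omega
  -- the bijection
  have bound : ∀ γ ∈ S, ∀ k : ℕ, 1 ≤ k →
      γ.count (DPair.P (k-1)) < cnt2 p q R k k + 1 := by
    intro γ hγ k hk
    have h := hPM γ hγ (k-1)
    have hk1 : k - 1 + 1 = k := by omega
    rw [hk1] at h
    omega
  set Φ : ↥S → (∀ k : {x // x ∈ D}, Fin (cnt2 p q R ↑k ↑k + 1)) :=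
    fun γ k => ⟨(γ : Multiset DPair).count (DPair.P (↑k - 1)),
      bound γ γ.2 ↑k (hD1 ↑k k.2)⟩ with hΦdef
  have hΦinj : Function.Injective Φ := by
    intro γ γ' h
    apply Subtype.ext
    apply Multiset.ext.mpr
    have hPc : ∀ j : ℕ, (γ : Multiset DPair).count (DPair.P j)
        = (γ' : Multiset DPair).count (DPair.P j) := by
      intro j
      by_cases hj : j + 1 ∈ D
      · have h1 := congrArg Fin.val (congrFun h ⟨j+1, hj⟩)
        simpa [hΦdef] using h1
      · have hj' : m + n ≤ j := by
          rw [hDdef, Finset.mem_Icc, hNdef] at hj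
          omega
        have h1 := hPM γ γ.2 j
        have h2 := hPM γ' γ'.2 j
        have h3 := cLvan j hj'
        omega
    intro d
    rcases d with j | j | j | j
    · rw [(hdet γ γ.2 j).1, (hdet γ' γ'.2 j).1]
    · rw [(hdet γ γ.2 j).2, (hdet γ' γ'.2 j).2]
    · exact hPc j
    · have h1 := hPM γ γ.2 j
      have h2 := hPM γ' γ'.2 j
      have h3 := hPc j
      omega
  have hΦsurj : Function.Surjective Φ := by
    intro f
    set fv : ℕ → ℕ := fun k => if h : k ∈ D then (f ⟨k, h⟩).val else 0 with hfv
    have hfvle : ∀ k, fv k ≤ cnt2 p q R k k := by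
      intro k
      rw [hfv]
      dsimp only
      split_ifs with h
      · exact Nat.lt_succ_iff.mp (f ⟨k, h⟩).2
      · exact Nat.zero_le _
    set γf : Multiset DPair := ∑ k ∈ D, (cnt2 p q R k (k-1) • ({DPair.AB (k-1)} : Multiset DPair)
        + cnt2 p q R (k-1) k • {DPair.BA (k-1)} + fv k • {DPair.P (k-1)}
        + (cnt2 p q R k k - fv k) • {DPair.M (k-1)}) with hγf
    have cABf : ∀ j : ℕ, γf.count (AB j) = if j+1 ∈ D then cnt2 p q R (j+1) j else 0 := by
      intro j
      have h := (count_gsum D hD1 (fun k => cnt2 p q R k (k-1)) (fun k => cnt2 p q R (k-1) k)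
        fv (fun k => cnt2 p q R k k - fv k) j).1
      simpa using h
    have cBAf : ∀ j : ℕ, γf.count (BA j) = if j+1 ∈ D then cnt2 p q R j (j+1) else 0 := by
      intro j
      have h := (count_gsum D hD1 (fun k => cnt2 p q R k (k-1)) (fun k => cnt2 p q R (k-1) k)
        fv (fun k => cnt2 p q R k k - fv k) j).2.1
      simpa using h
    have cPf : ∀ j : ℕ, γf.count (DPair.P j) = if j+1 ∈ D then fv (j+1) else 0 := by
      intro j
      have h := (count_gsum D hD1 (fun k => cnt2 p q R k (k-1)) (fun k => cnt2 p q R (k-1) k)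
        fv (fun k => cnt2 p q R k k - fv k) j).2.2.1
      simpa using h
    have cMf : ∀ j : ℕ, γf.count (M j)
        = if j+1 ∈ D then cnt2 p q R (j+1) (j+1) - fv (j+1) else 0 := by
      intro j
      have h := (count_gsum D hD1 (fun k => cnt2 p q R k (k-1)) (fun k => cnt2 p q R (k-1) k)
        fv (fun k => cnt2 p q R k k - fv k) j).2.2.2
      simpa using h
    have hmemD : ∀ j : ℕ, (j + 1 ∈ D ↔ j ≤ m + n) := by
      intro j
      rw [hDdef, Finset.mem_Icc, hNdef]
      omega
    have hAf : muA γf = p := by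
      apply Multiset.ext.mpr
      intro k
      rcases k with - | j
      · have h1 : (muA γf).count 0 = 0 := by
          unfold muA
          rw [Multiset.count_filter]
          simp
        have h2 : p.count 0 = 0 := by
          rw [Multiset.count_eq_zero]
          intro hmem
          exact absurd (γ₁.parts_pos hmem) (lt_irrefl 0)
        rw [h1, h2]
      · rw [count_muA, cABf j, cPf j, cMf j, cBAf (j+1)]
        simp only [show ∀ t : ℕ, t + 1 + 1 = t + 2 from fun t => rfl]
        by_cases hj : j + 1 ∈ D
        · rw [if_pos hj, if_pos hj, if_pos hj]
          by_cases hj2 : j + 2 ∈ D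
          · rw [if_pos hj2, P1 j]
            have := hfvle (j+1)
            omega
          · rw [if_neg hj2, P1 j]
            have hj2' : m + n ≤ j + 1 := by
              rw [hmemD (j+1)] at hj2
              omega
            have h5 := (pvan (j+1) hj2').2
            simp only [show ∀ t : ℕ, t + 1 + 1 = t + 2 from fun t => rfl] at h5
            have := hfvle (j+1)
            omega
        · have hj' : m + n < j + 1 := by
            rw [hmemD j] at hj
            omega
          have hj2 : j + 2 ∉ D := by
            rw [hmemD (j+1)]
            omega
          rw [if_neg hj, if_neg hj, if_neg hj, if_neg hj2]
          have h5 := pcvan (j+1) (by omega)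
          omega
    have hBf : muB γf = q := by
      apply Multiset.ext.mpr
      intro k
      rcases k with - | j
      · have h1 : (muB γf).count 0 = 0 := by
          unfold muB
          rw [Multiset.count_filter]
          simp
        have h2 : q.count 0 = 0 := by
          rw [Multiset.count_eq_zero]
          intro hmem
          exact absurd (γ₂.parts_pos hmem) (lt_irrefl 0)
        rw [h1, h2]
      · rw [count_muB, cBAf j, cPf j, cMf j, cABf (j+1)]
        simp only [show ∀ t : ℕ, t + 1 + 1 = t + 2 from fun t => rfl]
        by_cases hj : j + 1 ∈ D
        · rw [if_pos hj, if_pos hj, if_pos hj]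
          by_cases hj2 : j + 2 ∈ D
          · rw [if_pos hj2, P2 j]
            have := hfvle (j+1)
            omega
          · rw [if_neg hj2, P2 j]
            have hj2' : m + n ≤ j + 1 := by
              rw [hmemD (j+1)] at hj2
              omega
            have h5 := (pvan (j+1) hj2').1
            simp only [show ∀ t : ℕ, t + 1 + 1 = t + 2 from fun t => rfl] at h5
            have := hfvle (j+1)
            omega
        · have hj' : m + n < j + 1 := by
            rw [hmemD j] at hj
            omega
          have hj2 : j + 2 ∉ D := by
            rw [hmemD (j+1)]
            omega
          rw [if_neg hj, if_neg hj, if_neg hj, if_neg hj2]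
          have h5 := qcvan (j+1) (by omega)
          omega
    have hmem : γf ∈ S := by
      refine ⟨⟨?_, ?_⟩, ?_, hAf, hBf⟩
      · have h1 : (muA γf).sum = (γf.map DPair.a).sum := sum_filter_pos _
        rw [hAf] at h1
        omega
      · have h1 : (muB γf).sum = (γf.map DPair.b).sum := sum_filter_pos _
        rw [hBf] at h1
        omega
      · intro j hj
        obtain ⟨h1, h2⟩ := hj
        have c1 : 0 < γf.count (AB j) := Multiset.count_pos.mpr h1
        have c2 : 0 < γf.count (BA j) := Multiset.count_pos.mpr h2
        rw [cABf j] at c1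
        rw [cBAf j] at c2
        rcases P3 j with h | h <;> split_ifs at c1 c2 <;> omega
    refine ⟨⟨γf, hmem⟩, ?_⟩
    funext k
    apply Fin.ext
    show γf.count (DPair.P (↑k - 1)) = ↑(f k)
    have hk1 : 1 ≤ (k : ℕ) := hD1 ↑k k.2
    have h1 : ((k : ℕ) - 1) + 1 = (k : ℕ) := by omega
    rw [cPf ((k : ℕ) - 1), h1, if_pos k.2, hfv]
    dsimp only
    rw [dif_pos k.2]
  -- assembling the count
  have hcard : S.ncard = Nat.card (∀ k : {x // x ∈ D}, Fin (cnt2 p q R ↑k ↑k + 1)) := by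
    rw [show S.ncard = Nat.card ↥S from rfl]
    exact Nat.card_eq_of_bijective Φ ⟨hΦinj, hΦsurj⟩
  rw [hcard, Nat.card_pi]
  have hT : ∏ k : {x // x ∈ D}, Nat.card (Fin (cnt2 p q R ↑k ↑k + 1))
      = ∏ k ∈ D, (cnt2 p q R k k + 1) := by
    rw [← Finset.prod_coe_sort D (fun k => cnt2 p q R k k + 1)]
    apply Finset.prod_congr rfl
    intro k _
    simp [Nat.card_eq_fintype_card]
  rw [hT]
  rw [finprod_subtype_eq_finprod_cond (f := fun k : ℕ => lambdaCount p q k + 1)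
    (fun k : ℕ => 1 ≤ k)]
  rw [finprod_cond_eq_prod_of_cond_iff (fun k => lambdaCount p q k + 1) (t := D) ?_]
  · symm
    apply Finset.prod_congr rfl
    intro k hk
    rw [lambdaCount_eq_cnt2 p q (hD1 k hk) hpR]
  · intro x hx
    have hx0 : lambdaCount p q x ≠ 0 := fun hc => hx (by simp [hc])
    obtain ⟨i, hi1, hi2⟩ := Set.nonempty_of_ncard_ne_zero hx0
    constructor
    · intro h1x
      rw [hDdef, Finset.mem_Icc, hNdef]
      have h := nthPart_le_sum p i
      rw [hi1] at h
      omega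
    · intro hxD
      exact hD1 x hxD
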